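/- Let y ∈ ℝ³, v ∈ ℝ³, and for x ≠ y define the 1-form ω̃(y;v) on ℝ³\{y} by ω̃(y;v)(x)(u) = u · ṽ(x), where ṽ(x) = (1/|x−y|²)·(2(v·(x−y)/|x−y|)(x−y)/|x−y| − v). Then for any u ∈ ℝ³, ω̃(y;v)(x)(u) = −v · dI_y(x)(u), where I_y(z) = y + (z−y)/|z−y|² is the inversion in the unit sphere centered at y. -/
import Mathlib


noncomputable section

open scoped RealInnerProductSpace

abbrev E3 := EuclideanSpace ℝ (Fin 3)

/-- The conformal transportation of `v ∈ T_yℝ³` to `x ≠ y`. -/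
def confTransport (y v x : E3) : E3 :=
  (‖x - y‖ ^ 2)⁻¹ • ((2 * ⟪v, ‖x - y‖⁻¹ • (x - y)⟫) • (‖x - y‖⁻¹ • (x - y)) - v)

/-- The inversion in the unit sphere centered at `y`. -/
def sphInv (y : E3) (z : E3) : E3 := y + (‖z - y‖ ^ 2)⁻¹ • (z - y)

theorem oneForm_eq_neg_inner_pushforward (y v x : E3) (hxy : x ≠ y) (u : E3) :
    ⟪u, confTransport y v x⟫ = -⟪v, fderiv ℝ (sphInv y) x u⟫ := by
  have hne : x - y ≠ 0 := sub_ne_zero.mpr hxy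
  have hn : ‖x - y‖ ≠ 0 := norm_ne_zero_iff.mpr hne
  have hns : ‖x - y‖ ^ 2 ≠ 0 := pow_ne_zero _ hn
  have hh : HasFDerivAt (fun z : E3 => z - y) (ContinuousLinearMap.id ℝ E3) x := by
    simpa using (hasFDerivAt_id x).sub_const y
  have hf' : HasFDerivAt (fun z : E3 => ‖z - y‖ ^ 2)
      ((fderivInnerCLM ℝ (x - y, x - y)).comp
        ((ContinuousLinearMap.id ℝ E3).prod (ContinuousLinearMap.id ℝ E3))) x := by
    refine (hh.inner ℝ hh).congr_of_eventuallyEq (Filter.Eventually.of_forall fun z => ?_)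
    exact (real_inner_self_eq_norm_sq _).symm
  have hinv : HasFDerivAt (fun z : E3 => (‖z - y‖ ^ 2)⁻¹)
      ((ContinuousLinearMap.smulRight (1 : ℝ →L[ℝ] ℝ) (-((‖x - y‖ ^ 2) ^ 2)⁻¹)).comp
        ((fderivInnerCLM ℝ (x - y, x - y)).comp
          ((ContinuousLinearMap.id ℝ E3).prod (ContinuousLinearMap.id ℝ E3)))) x :=
    ((hasDerivAt_inv hns).hasFDerivAt).comp x hf'
  have h : HasFDerivAt (sphInv y) _ x := (hinv.smul hh).const_add y
  rw [h.fderiv]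
  simp only [confTransport, ContinuousLinearMap.add_apply, ContinuousLinearMap.smul_apply,
    ContinuousLinearMap.id_apply, ContinuousLinearMap.smulRight_apply,
    ContinuousLinearMap.comp_apply, ContinuousLinearMap.prod_apply, ContinuousLinearMap.one_apply,
    fderivInnerCLM_apply, inner_add_right, inner_sub_right, inner_smul_right, inner_smul_left,
    real_inner_smul_left, real_inner_smul_right, smul_eq_mul, map_sub]
  simp only [inner_sub_right, inner_sub_left]
  simp only [real_inner_comm x u, real_inner_comm y u, real_inner_comm v u]
  set a := ⟪v, x⟫
  set b := ⟪v, y⟫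
  set c := ⟪u, x⟫
  set d := ⟪u, y⟫
  set e := ⟪u, v⟫
  field_simp
  ring
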